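/- arXiv:2602.04019 — 3 statements merged into one kernel-verified Lean document; each statement's English description precedes it below -/
import Mathlib

section
/- Let H be a symmetric positive definite matrix written as H = D + E where D is the block-diagonal part (with each diagonal block positive definite) and E the off-diagonal part. Define M = D^{-1/2} E D^{-1/2} and ρ = ‖M‖₂, and assume ρ < 1. Then for any vector g, the difference between the global minimizer θ_glob = -H^{-1} g and the blockwise minimizer θ_loc = -D^{-1} g satisfies ‖θ_glob - θ_loc‖₂ ≤ (ρ/(1-ρ)) · ‖D^{-1}‖₂ · ‖g‖₂. -/
open Matrix MeasureTheory BigOperators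
noncomputable section

/-- Euclidean (spectral / operator) norm of a real square matrix. -/
def opN {n : Type*} [Fintype n] [DecidableEq n] (A : Matrix n n ℝ) : ℝ :=
  ‖Matrix.toEuclideanCLM (𝕜 := ℝ) A‖

/-- Euclidean norm of a vector. -/
def vN {n : Type*} [Fintype n] (v : n → ℝ) : ℝ := Real.sqrt (∑ i, v i ^ 2)

/-- The square root of a positive semidefinite matrix, as `Matrix.PosSemidef.sqrt` was defined
in the older Mathlib. -/
def psdSqrt {n : Type*} [Fintype n] [DecidableEq n] {A : Matrix n n ℝ} (hA : A.PosSemidef) :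
    Matrix n n ℝ :=
  hA.1.eigenvectorUnitary.1 * diagonal ((↑) ∘ (√·) ∘ hA.1.eigenvalues) *
    (star hA.1.eigenvectorUnitary : Matrix n n ℝ)

section Aux

variable {n : Type*} [Fintype n] [DecidableEq n]

lemma opN_nonneg (A : Matrix n n ℝ) : 0 ≤ opN A := norm_nonneg _

lemma opN_mul_le (A B : Matrix n n ℝ) : opN (A * B) ≤ opN A * opN B := by
  rw [opN, opN, opN, _root_.map_mul]
  exact norm_mul_le _ _

lemma opN_one_le : opN (1 : Matrix n n ℝ) ≤ 1 := by
  rw [opN, _root_.map_one]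
  exact ContinuousLinearMap.norm_id_le

lemma opN_sub_le (A B : Matrix n n ℝ) : opN (A - B) ≤ opN A + opN B := by
  rw [opN, opN, opN, map_sub]
  exact norm_sub_le _ _

lemma opN_herm_sq (A : Matrix n n ℝ) (h : Aᴴ = A) : opN (A * A) = opN A * opN A := by
  rw [opN, opN, _root_.map_mul]
  have hs : star (Matrix.toEuclideanCLM (𝕜 := ℝ) A) = Matrix.toEuclideanCLM (𝕜 := ℝ) A := by
    rw [← map_star]
    exact congrArg _ ((Matrix.star_eq_conjTranspose A).trans h)
  calc ‖Matrix.toEuclideanCLM (𝕜 := ℝ) A * Matrix.toEuclideanCLM (𝕜 := ℝ) A‖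
      = ‖star (Matrix.toEuclideanCLM (𝕜 := ℝ) A) * Matrix.toEuclideanCLM (𝕜 := ℝ) A‖ := by
        rw [hs]
    _ = ‖Matrix.toEuclideanCLM (𝕜 := ℝ) A‖ * ‖Matrix.toEuclideanCLM (𝕜 := ℝ) A‖ :=
        ContinuousLinearMap.norm_adjoint_comp_self _

lemma vN_eq (v : n → ℝ) : vN v = ‖(WithLp.equiv 2 (n → ℝ)).symm v‖ := by
  rw [vN, EuclideanSpace.norm_eq]
  congr 1
  refine Finset.sum_congr rfl fun i _ => ?_
  rw [Real.norm_eq_abs, sq_abs]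
  rfl

lemma vN_mulVec_le (A : Matrix n n ℝ) (v : n → ℝ) : vN (A *ᵥ v) ≤ opN A * vN v := by
  rw [vN_eq, vN_eq, opN]
  have h := (Matrix.toEuclideanCLM (𝕜 := ℝ) A).le_opNorm ((WithLp.equiv 2 (n → ℝ)).symm v)
  exact h

lemma psdSqrt_mul_self {A : Matrix n n ℝ} (hA : A.PosSemidef) : psdSqrt hA * psdSqrt hA = A := by
  conv_rhs => rw [hA.1.spectral_theorem]
  rw [psdSqrt, Unitary.conjStarAlgAut_apply]
  simp only [Matrix.mul_assoc]
  rw [← Matrix.mul_assoc (star _ : Matrix n n ℝ) _ (diagonal _ * _), Unitary.coe_star_mul_self,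
    Matrix.one_mul, ← Matrix.mul_assoc (diagonal _), diagonal_mul_diagonal]
  congr 3; funext i; simp [Real.mul_self_sqrt (hA.eigenvalues_nonneg i)]

lemma psdSqrt_isHermitian {A : Matrix n n ℝ} (hA : A.PosSemidef) : (psdSqrt hA).IsHermitian := by
  unfold psdSqrt IsHermitian
  simp [Matrix.mul_assoc, Matrix.star_eq_conjTranspose, Matrix.conjTranspose_eq_transpose_of_trivial]

end Aux

theorem aux_main
    {n L : Type*} [Fintype n] [DecidableEq n]
    (blk : n → L) [DecidableEq L] (H D E M : Matrix n n ℝ)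
    (hH : H.PosDef) (hHsymm : H.IsSymm) (hD : D.PosDef)
    (hDdef : ∀ i j, D i j = if blk i = blk j then H i j else 0)
    (hE : E = H - D)
    (hM : M = (psdSqrt hD.posSemidef)⁻¹ * E * (psdSqrt hD.posSemidef)⁻¹)
    (ρ : ℝ) (hρ : ρ = opN M) (hρ1 : ρ < 1) (g : n → ℝ) :
    vN ((-(H⁻¹ *ᵥ g)) - (-(D⁻¹ *ᵥ g))) ≤ ρ / (1 - ρ) * opN D⁻¹ * vN g := by
  set S : Matrix n n ℝ := psdSqrt hD.posSemidef with hSdef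
  have hSS : S * S = D := psdSqrt_mul_self hD.posSemidef
  have hSherm : S.IsHermitian := psdSqrt_isHermitian hD.posSemidef
  clear_value S
  -- S is invertible
  have hdetS : IsUnit S.det := by
    have h2 : S.det * S.det = D.det := by rw [← Matrix.det_mul, hSS]
    have : S.det ≠ 0 := by
      intro h
      have := hD.det_pos
      rw [← h2, h, mul_zero] at this
      exact lt_irrefl 0 this
    exact isUnit_iff_ne_zero.mpr this
  have hS1 : S * S⁻¹ = 1 := Matrix.mul_nonsing_inv _ hdetS
  have hS2 : S⁻¹ * S = 1 := Matrix.nonsing_inv_mul _ hdetS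
  -- 1 + M = S⁻¹ * H * S⁻¹
  have hone : (1 : Matrix n n ℝ) + M = S⁻¹ * H * S⁻¹ := by
    rw [hM, hE]
    have : S⁻¹ * D * S⁻¹ = 1 := by
      rw [← hSS, ← Matrix.mul_assoc, Matrix.mul_assoc (S⁻¹ * S), hS2, hS1, Matrix.one_mul]
    rw [Matrix.mul_sub, Matrix.sub_mul, this]
    abel
  -- 1 + M is invertible
  have hunit : IsUnit ((1 : Matrix n n ℝ) + M).det := by
    rw [hone]
    have hSinv : IsUnit S⁻¹ := ⟨⟨S⁻¹, S, hS2, hS1⟩, rfl⟩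
    have hHu : IsUnit H := (Matrix.isUnit_iff_isUnit_det H).mpr
      (isUnit_iff_ne_zero.mpr (ne_of_gt hH.det_pos))
    exact (Matrix.isUnit_iff_isUnit_det _).mp ((hSinv.mul hHu).mul hSinv)
  set B : Matrix n n ℝ := ((1 : Matrix n n ℝ) + M)⁻¹ with hBdef
  have hB1 : B * (1 + M) = 1 := Matrix.nonsing_inv_mul _ hunit
  have hBM : B * M = 1 - B := by
    have h : B + B * M = 1 := by rw [← hB1, Matrix.mul_add, Matrix.mul_one]
    exact eq_sub_of_add_eq' h
  -- H⁻¹ and D⁻¹ in terms of S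
  have hHfac : H = S * (1 + M) * S := by
    rw [hone, ← Matrix.mul_assoc, ← Matrix.mul_assoc, hS1, Matrix.one_mul,
      Matrix.mul_assoc, hS2, Matrix.mul_one]
  have hHinv : H⁻¹ = S⁻¹ * B * S⁻¹ := by
    rw [hHfac, Matrix.mul_inv_rev, Matrix.mul_inv_rev, ← Matrix.mul_assoc, hBdef]
  have hDinv : D⁻¹ = S⁻¹ * S⁻¹ := by
    rw [← hSS, Matrix.mul_inv_rev]
  -- the key factorization
  have key : D⁻¹ - H⁻¹ = S⁻¹ * (B * M) * S⁻¹ := by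
    rw [hBM, hDinv, hHinv, Matrix.mul_sub, Matrix.sub_mul, Matrix.mul_one]
  -- norm bounds
  have hρ0 : 0 ≤ ρ := hρ ▸ opN_nonneg M
  have h1ρ : 0 < 1 - ρ := by linarith
  have hBn : opN B ≤ (1 - ρ)⁻¹ := by
    have hB2 : B = 1 - B * M := by rw [hBM]; abel
    have hstep : opN B ≤ 1 + opN B * ρ := by
      calc opN B = opN ((1 : Matrix n n ℝ) - B * M) := by rw [← hB2]
        _ ≤ opN (1 : Matrix n n ℝ) + opN (B * M) := opN_sub_le _ _
        _ ≤ 1 + opN B * ρ := by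
            have h3 := opN_mul_le B M
            rw [← hρ] at h3
            have := opN_one_le (n := n)
            linarith
    have h2 : opN B ≤ 1 / (1 - ρ) := (le_div_iff₀ h1ρ).mpr (by nlinarith)
    rwa [one_div] at h2
  have hBMn : opN (B * M) ≤ ρ / (1 - ρ) := by
    calc opN (B * M) ≤ opN B * opN M := opN_mul_le B M
      _ ≤ (1 - ρ)⁻¹ * ρ := by
          rw [← hρ]
          exact mul_le_mul_of_nonneg_right hBn hρ0
      _ = ρ / (1 - ρ) := by field_simp
  -- opN D⁻¹ = (opN S⁻¹)²
  have hSinvherm : (S⁻¹)ᴴ = S⁻¹ := hSherm.inv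
  have hDinvn : opN D⁻¹ = opN S⁻¹ * opN S⁻¹ := by
    rw [hDinv]
    exact opN_herm_sq S⁻¹ hSinvherm
  -- assemble
  have hvec : (-(H⁻¹ *ᵥ g)) - (-(D⁻¹ *ᵥ g)) = (D⁻¹ - H⁻¹) *ᵥ g := by
    rw [Matrix.sub_mulVec]; abel
  rw [hvec]
  have step1 : vN ((D⁻¹ - H⁻¹) *ᵥ g) ≤ opN (D⁻¹ - H⁻¹) * vN g := vN_mulVec_le _ _
  have hSn : (0:ℝ) ≤ opN S⁻¹ := opN_nonneg _
  have hgn : (0:ℝ) ≤ vN g := Real.sqrt_nonneg _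
  have step2 : opN (D⁻¹ - H⁻¹) ≤ ρ / (1 - ρ) * opN D⁻¹ := by
    rw [key, hDinvn]
    calc opN (S⁻¹ * (B * M) * S⁻¹) ≤ opN (S⁻¹ * (B * M)) * opN S⁻¹ := opN_mul_le _ _
      _ ≤ opN S⁻¹ * opN (B * M) * opN S⁻¹ :=
          mul_le_mul_of_nonneg_right (opN_mul_le _ _) hSn
      _ ≤ ρ / (1 - ρ) * (opN S⁻¹ * opN S⁻¹) := by
          have h0 : 0 ≤ ρ / (1 - ρ) := div_nonneg hρ0 (le_of_lt h1ρ)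
          nlinarith [opN_nonneg (B * M)]
  calc vN ((D⁻¹ - H⁻¹) *ᵥ g) ≤ opN (D⁻¹ - H⁻¹) * vN g := step1
    _ ≤ ρ / (1 - ρ) * opN D⁻¹ * vN g := mul_le_mul_of_nonneg_right step2 hgn


/-- gap between the global quadratic minimizer `-H⁻¹ g` and the
blockwise minimizer `-D⁻¹ g` is controlled by the whitened coupling `ρ`. -/
theorem global_vs_blockwise_oracle
    {n L : Type*} [Fintype n] [DecidableEq n]
    (blk : n → L) [DecidableEq L] (H D E M : Matrix n n ℝ)
    (hH : H.PosDef) (hHsymm : H.IsSymm) (hD : D.PosDef)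
    (hDdef : ∀ i j, D i j = if blk i = blk j then H i j else 0)
    (hE : E = H - D)
    (hM : M = (psdSqrt hD.posSemidef)⁻¹ * E * (psdSqrt hD.posSemidef)⁻¹)
    (ρ : ℝ) (hρ : ρ = opN M) (hρ1 : ρ < 1) (g : n → ℝ) :
    vN ((-(H⁻¹ *ᵥ g)) - (-(D⁻¹ *ᵥ g))) ≤ ρ / (1 - ρ) * opN D⁻¹ * vN g :=
  aux_main blk H D E M hH hHsymm hD hDdef hE hM ρ hρ hρ1 g
end
end

section
/- Let Σ be symmetric positive definite with largest eigenvalue λ_max, c a vector, R(θ) = ½ θᵀΣθ - θᵀc, and θ* = Σ^{-1}c. Then for any B > 0 and any θ with ‖θ‖₂ ≤ B, R(θ) - R(θ*) ≥ ½ · max(‖Σ^{-1/2}c‖₂ - √λ_max · B, 0)². -/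
open Matrix MeasureTheory BigOperators
noncomputable section

open scoped ComplexOrder in
/-- The positive semidefinite square root of a positive semidefinite matrix (as in the
older Mathlib, where it was `Matrix.PosSemidef.sqrt`). -/
noncomputable def Matrix.PosSemidef.sqrt {n : Type*} [Fintype n] [DecidableEq n] {𝕜 : Type*}
    [RCLike 𝕜] {A : Matrix n n 𝕜} (hA : A.PosSemidef) : Matrix n n 𝕜 :=
  hA.isHermitian.eigenvectorUnitary.1 * diagonal ((↑) ∘ (√·) ∘ hA.isHermitian.eigenvalues) *
    (star hA.isHermitian.eigenvectorUnitary : Matrix n n 𝕜)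

lemma psd_sqrt_mul_self {n : Type*} [Fintype n] [DecidableEq n] {A : Matrix n n ℝ}
    (hA : A.PosSemidef) : hA.sqrt * hA.sqrt = A := by
  have hU : (star hA.isHermitian.eigenvectorUnitary : Matrix n n ℝ) *
      hA.isHermitian.eigenvectorUnitary.1 = 1 := Unitary.coe_star_mul_self _
  have hD : diagonal ((↑) ∘ (√·) ∘ hA.isHermitian.eigenvalues) *
      diagonal ((↑) ∘ (√·) ∘ hA.isHermitian.eigenvalues) =
      diagonal (RCLike.ofReal ∘ hA.isHermitian.eigenvalues : n → ℝ) := by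
    rw [diagonal_mul_diagonal]
    congr 1
    funext i
    simp [Real.mul_self_sqrt (hA.eigenvalues_nonneg i)]
  conv_rhs => rw [hA.isHermitian.spectral_theorem, Unitary.conjStarAlgAut_apply]
  simp only [Matrix.PosSemidef.sqrt]
  rw [← hD]
  simp only [Matrix.mul_assoc]
  congr 2
  rw [← Matrix.mul_assoc _ _ (diagonal _ * _), hU, Matrix.one_mul]
  rfl

lemma psd_sqrt_symm {n : Type*} [Fintype n] [DecidableEq n] {A : Matrix n n ℝ}
    (hA : A.PosSemidef) : (hA.sqrt)ᵀ = hA.sqrt := by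
  rw [← conjTranspose_eq_transpose_of_trivial]
  simp only [Matrix.PosSemidef.sqrt, conjTranspose_mul, diagonal_conjTranspose,
    Matrix.mul_assoc]
  simp [Matrix.star_eq_conjTranspose]

lemma vN_eq_dot {n : Type*} [Fintype n] (v : n → ℝ) : vN v = Real.sqrt (v ⬝ᵥ v) := by
  simp [vN, dotProduct, sq]

lemma vN_eq_norm {n : Type*} [Fintype n] (v : n → ℝ) :
    vN v = ‖(WithLp.equiv 2 (n → ℝ)).symm v‖ := by
  rw [EuclideanSpace.norm_eq, vN]
  congr 1
  simp [sq_abs]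

lemma dot_self_nonneg {n : Type*} [Fintype n] (v : n → ℝ) : 0 ≤ v ⬝ᵥ v :=
  Finset.sum_nonneg fun i _ => mul_self_nonneg _

lemma vN_nonneg {n : Type*} [Fintype n] (v : n → ℝ) : 0 ≤ vN v := Real.sqrt_nonneg _

lemma vN_sub_le {n : Type*} [Fintype n] (x y : n → ℝ) : vN x - vN y ≤ vN (x - y) := by
  simp only [vN_eq_norm]
  have : (WithLp.equiv 2 (n → ℝ)).symm (x - y)
      = (WithLp.equiv 2 (n → ℝ)).symm x - (WithLp.equiv 2 (n → ℝ)).symm y := rfl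
  rw [this]
  exact norm_sub_norm_le _ _

lemma symm_swap {n : Type*} [Fintype n] {A : Matrix n n ℝ} (hA : Aᵀ = A) (x y : n → ℝ) :
    (A *ᵥ x) ⬝ᵥ y = x ⬝ᵥ (A *ᵥ y) := by
  rw [dotProduct_comm, dotProduct_mulVec, ← mulVec_transpose, hA, dotProduct_comm]

/-- norm-budget hardness: for `‖θ‖₂ ≤ B`,
`R(θ) - R(θ*) ≥ ½ (‖Σ^{-1/2}c‖₂ - √λ_max B)₊²`. -/
theorem budget_hardness
    {d : Type*} [Fintype d] [DecidableEq d]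
    (Sig : Matrix d d ℝ) (hSig : Sig.PosDef) (c : d → ℝ)
    (lamMax : ℝ)
    (hEig : Module.End.HasEigenvalue (Matrix.toLin' Sig) lamMax)
    (hBound : ∀ v : d → ℝ, v ⬝ᵥ (Sig *ᵥ v) ≤ lamMax * (v ⬝ᵥ v))
    (R : (d → ℝ) → ℝ)
    (hR : ∀ θ, R θ = (1/2) * (θ ⬝ᵥ (Sig *ᵥ θ)) - θ ⬝ᵥ c)
    (θs : d → ℝ) (hθs : θs = Sig⁻¹ *ᵥ c) :
    ∀ B : ℝ, 0 < B → ∀ θ : d → ℝ, vN θ ≤ B →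
      R θ - R θs ≥
        (1/2) * (max (vN ((hSig.posSemidef.sqrt)⁻¹ *ᵥ c) - Real.sqrt lamMax * B) 0) ^ 2 := by
  intro B hB θ hθ
  set S := hSig.posSemidef.sqrt with hSdef
  have hSS : S * S = Sig := psd_sqrt_mul_self hSig.posSemidef
  have hSsymm : Sᵀ = S := by
    exact psd_sqrt_symm _
  -- S is invertible
  have hdet : IsUnit S.det := by
    have : S.det * S.det = Sig.det := by rw [← det_mul, hSS]
    have hpos : (0:ℝ) < Sig.det := hSig.det_pos
    refine isUnit_iff_ne_zero.mpr (fun h => ?_)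
    rw [h, mul_zero] at this
    exact hpos.ne (this)
  have hSinv : S * S⁻¹ = 1 := mul_nonsing_inv S hdet
  have hSinv' : S⁻¹ * S = 1 := nonsing_inv_mul S hdet
  have hSinvsymm : (S⁻¹)ᵀ = S⁻¹ := by rw [transpose_nonsing_inv, hSsymm]
  have hSigInv : S⁻¹ * S⁻¹ = Sig⁻¹ := by rw [← hSS, Matrix.mul_inv_rev]
  -- lamMax ≥ 0
  have hlam : 0 < lamMax := by
    obtain ⟨v, hv⟩ := hEig.exists_hasEigenvector
    have hv0 : v ≠ 0 := hv.right
    have heq : Sig *ᵥ v = lamMax • v := by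
      have := hv.apply_eq_smul
      rwa [Matrix.toLin'_apply] at this
    have h1 : v ⬝ᵥ (Sig *ᵥ v) = lamMax * (v ⬝ᵥ v) := by
      rw [heq, dotProduct_smul, smul_eq_mul]
    have h2 : 0 < v ⬝ᵥ (Sig *ᵥ v) := by
      have := hSig.re_dotProduct_pos hv0
      simpa using this
    have h3 : 0 < v ⬝ᵥ v := by
      have := (dotProduct_self_eq_zero (v := v)).not
      have h4 : 0 ≤ v ⬝ᵥ v := dot_self_nonneg v
      rcases h4.lt_or_eq with h | h
      · exact h
      · exact absurd h.symm (by simpa [hv0] using (dotProduct_self_eq_zero (v := v)).not.mpr (by simp [hv0]))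
    nlinarith
  set u := S *ᵥ θ - S⁻¹ *ᵥ c with hu
  -- R θ - R θs = ½ u⬝u
  have key : R θ - R θs = (1/2) * (u ⬝ᵥ u) := by
    have e1 : (S *ᵥ θ) ⬝ᵥ (S *ᵥ θ) = θ ⬝ᵥ (Sig *ᵥ θ) := by
      rw [symm_swap hSsymm, mulVec_mulVec, hSS]
    have e2 : (S *ᵥ θ) ⬝ᵥ (S⁻¹ *ᵥ c) = θ ⬝ᵥ c := by
      rw [symm_swap hSsymm, mulVec_mulVec, hSinv, one_mulVec]
    have e3 : (S⁻¹ *ᵥ c) ⬝ᵥ (S *ᵥ θ) = θ ⬝ᵥ c := by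
      rw [dotProduct_comm]; exact e2
    have e4 : (S⁻¹ *ᵥ c) ⬝ᵥ (S⁻¹ *ᵥ c) = c ⬝ᵥ (Sig⁻¹ *ᵥ c) := by
      rw [symm_swap hSinvsymm, mulVec_mulVec, hSigInv]
    have hc : Sig *ᵥ θs = c := by
      rw [hθs, mulVec_mulVec, mul_nonsing_inv _ hSig.det_pos.ne'.isUnit, one_mulVec]
    have e5 : θs ⬝ᵥ (Sig *ᵥ θs) = c ⬝ᵥ (Sig⁻¹ *ᵥ c) := by
      rw [hc, hθs, dotProduct_comm]
    have e6 : θs ⬝ᵥ c = c ⬝ᵥ (Sig⁻¹ *ᵥ c) := by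
      rw [hθs, dotProduct_comm]
    rw [hR θ, hR θs, hu]
    simp only [dotProduct_sub, sub_dotProduct, e1, e2, e3, e4, e5, e6]
    ring
  -- vN (S *ᵥ θ) ≤ √lamMax * B
  have hSθ : vN (S *ᵥ θ) ≤ Real.sqrt lamMax * B := by
    rw [vN_eq_dot]
    have e1 : (S *ᵥ θ) ⬝ᵥ (S *ᵥ θ) = θ ⬝ᵥ (Sig *ᵥ θ) := by
      rw [symm_swap hSsymm, mulVec_mulVec, hSS]
    rw [e1]
    calc Real.sqrt (θ ⬝ᵥ (Sig *ᵥ θ)) ≤ Real.sqrt (lamMax * (θ ⬝ᵥ θ)) :=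
          Real.sqrt_le_sqrt (hBound θ)
      _ = Real.sqrt lamMax * Real.sqrt (θ ⬝ᵥ θ) := Real.sqrt_mul hlam.le _
      _ ≤ Real.sqrt lamMax * B := by
          apply mul_le_mul_of_nonneg_left _ (Real.sqrt_nonneg _)
          rw [← vN_eq_dot]; exact hθ
  -- max (...) 0 ≤ vN u
  have hmax : max (vN (S⁻¹ *ᵥ c) - Real.sqrt lamMax * B) 0 ≤ vN u := by
    apply max_le _ (vN_nonneg u)
    have h1 : vN (S⁻¹ *ᵥ c) - vN (S *ᵥ θ) ≤ vN (S⁻¹ *ᵥ c - S *ᵥ θ) := vN_sub_le _ _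
    have h2 : vN (S⁻¹ *ᵥ c - S *ᵥ θ) = vN u := by
      rw [hu, vN_eq_dot, vN_eq_dot]
      congr 1
      simp [dotProduct_sub, sub_dotProduct, dotProduct_comm]
      ring
    linarith
  have huu : u ⬝ᵥ u = vN u ^ 2 := by
    rw [vN_eq_dot, Real.sq_sqrt (dot_self_nonneg u)]
  rw [ge_iff_le, key, huu]
  have hm0 : 0 ≤ max (vN (S⁻¹ *ᵥ c) - Real.sqrt lamMax * B) 0 := le_max_right _ _
  nlinarith [pow_le_pow_left₀ hm0 hmax 2]
end
end

section
/- Let H_SS ≻ 0 with block-diagonal part D_S and off-diagonal part E_S = H_SS - D_S; set M_S = D_S^{-1/2} E_S D_S^{-1/2} and ρ_S = ‖M_S‖₂ < 1. Define Δ(S) = ½ g_Sᵀ H_SS^{-1} g_S and Δ_add(S) = ½ g_Sᵀ D_S^{-1} g_S. Then (1/(1+ρ_S)) Δ_add(S) ≤ Δ(S) ≤ (1/(1-ρ_S)) Δ_add(S), and |Δ(S) - Δ_add(S)| ≤ (ρ_S/(1-ρ_S)) Δ_add(S). -/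
open Matrix MeasureTheory BigOperators
open scoped MatrixOrder
noncomputable section

section Aux

variable {n : Type*} [Fintype n] [DecidableEq n]

lemma aux_dot_nonneg {A : Matrix n n ℝ} (hA : A.PosSemidef) (x : n → ℝ) :
    0 ≤ x ⬝ᵥ A *ᵥ x := by
  have := hA.dotProduct_mulVec_nonneg x
  simpa using this

lemma aux_sym_swap {A : Matrix n n ℝ} (hA : Aᵀ = A) (x y : n → ℝ) :
    x ⬝ᵥ A *ᵥ y = y ⬝ᵥ A *ᵥ x := by
  rw [Matrix.dotProduct_mulVec, ← Matrix.mulVec_transpose, hA, dotProduct_comm]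

lemma aux_cs {A : Matrix n n ℝ} (hA : A.PosDef) (x y : n → ℝ) :
    (x ⬝ᵥ y) ^ 2 ≤ (x ⬝ᵥ A *ᵥ x) * (y ⬝ᵥ A⁻¹ *ᵥ y) := by
  have hAt : Aᵀ = A := by
    have := hA.isHermitian
    rwa [Matrix.IsHermitian, Matrix.conjTranspose_eq_transpose_of_trivial] at this
  have hdet : A.det ≠ 0 := hA.det_pos.ne'
  set z : n → ℝ := A⁻¹ *ᵥ y with hz
  have hAz : A *ᵥ z = y := by
    rw [hz, Matrix.mulVec_mulVec, Matrix.mul_nonsing_inv A (isUnit_iff_ne_zero.mpr hdet), Matrix.one_mulVec]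
  have key : ∀ t : ℝ, 0 ≤ (y ⬝ᵥ A⁻¹ *ᵥ y) * (t * t) + (2 * (x ⬝ᵥ y)) * t + (x ⬝ᵥ A *ᵥ x) := by
    intro t
    have h0 := aux_dot_nonneg hA.posSemidef (x + t • z)
    have e1 : (x + t • z) ⬝ᵥ A *ᵥ (x + t • z)
        = (x ⬝ᵥ A *ᵥ x) + t * (x ⬝ᵥ A *ᵥ z) + t * (z ⬝ᵥ A *ᵥ x) + t * t * (z ⬝ᵥ A *ᵥ z) := by
      simp only [Matrix.mulVec_add, Matrix.mulVec_smul, add_dotProduct,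
        dotProduct_add, smul_dotProduct, dotProduct_smul, smul_eq_mul]
      ring
    have e2 : x ⬝ᵥ A *ᵥ z = x ⬝ᵥ y := by rw [hAz]
    have e3 : z ⬝ᵥ A *ᵥ x = x ⬝ᵥ y := by rw [aux_sym_swap hAt, e2]
    have e4 : z ⬝ᵥ A *ᵥ z = y ⬝ᵥ A⁻¹ *ᵥ y := by
      rw [hAz, dotProduct_comm, hz]
    rw [e1, e2, e3, e4] at h0
    nlinarith [h0]
  have := discrim_le_zero key
  rw [discrim] at this
  nlinarith [this]

lemma aux_inv_antitone {A B : Matrix n n ℝ} (hA : A.PosDef) (hB : B.PosDef)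
    (h : ∀ x, x ⬝ᵥ A *ᵥ x ≤ x ⬝ᵥ B *ᵥ x) (y : n → ℝ) :
    y ⬝ᵥ B⁻¹ *ᵥ y ≤ y ⬝ᵥ A⁻¹ *ᵥ y := by
  have hdet : B.det ≠ 0 := hB.det_pos.ne'
  set u : n → ℝ := B⁻¹ *ᵥ y with hu
  have hBu : B *ᵥ u = y := by
    rw [hu, Matrix.mulVec_mulVec, Matrix.mul_nonsing_inv B (isUnit_iff_ne_zero.mpr hdet), Matrix.one_mulVec]
  have hp : y ⬝ᵥ B⁻¹ *ᵥ y = u ⬝ᵥ y := by rw [dotProduct_comm]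
  have huBu : u ⬝ᵥ B *ᵥ u = u ⬝ᵥ y := by rw [hBu]
  have hcs := aux_cs hA u y
  have hAB := h u
  have hp0 : 0 ≤ y ⬝ᵥ B⁻¹ *ᵥ y := aux_dot_nonneg hB.inv.posSemidef y
  have hq0 : 0 ≤ y ⬝ᵥ A⁻¹ *ᵥ y := aux_dot_nonneg hA.inv.posSemidef y
  rcases hp0.eq_or_lt with h0 | h0
  · linarith
  · nlinarith [hcs, hAB, huBu, hp, h0]

lemma aux_opN_quad (M : Matrix n n ℝ) (u : n → ℝ) :
    |u ⬝ᵥ M *ᵥ u| ≤ opN M * (u ⬝ᵥ u) := by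
  set v : EuclideanSpace ℝ n := (WithLp.equiv 2 (n → ℝ)).symm u with hv
  have h1 : (inner ℝ v (Matrix.toEuclideanCLM (𝕜 := ℝ) M v) : ℝ) = u ⬝ᵥ M *ᵥ u := by
    rw [hv, Matrix.toEuclideanCLM_toLp]
    simp [PiLp.inner_apply, dotProduct, RCLike.inner_apply, mul_comm]
  have h2 : (inner ℝ v v : ℝ) = u ⬝ᵥ u := by
    rw [hv]
    simp [PiLp.inner_apply, dotProduct, RCLike.inner_apply]
    rw [EuclideanSpace.norm_eq, Real.sq_sqrt (by positivity)]
    simp [Real.norm_eq_abs, sq_abs, sq]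
  have h3 : |(inner ℝ v (Matrix.toEuclideanCLM (𝕜 := ℝ) M v) : ℝ)|
      ≤ ‖v‖ * ‖Matrix.toEuclideanCLM (𝕜 := ℝ) M v‖ := abs_real_inner_le_norm _ _
  have h4 : ‖Matrix.toEuclideanCLM (𝕜 := ℝ) M v‖ ≤ opN M * ‖v‖ :=
    (Matrix.toEuclideanCLM (𝕜 := ℝ) M).le_opNorm v
  have h5 : (inner ℝ v v : ℝ) = ‖v‖ * ‖v‖ := real_inner_self_eq_norm_mul_norm v
  have hvn : 0 ≤ ‖v‖ := norm_nonneg v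
  calc |u ⬝ᵥ M *ᵥ u| = |(inner ℝ v (Matrix.toEuclideanCLM (𝕜 := ℝ) M v) : ℝ)| := by rw [h1]
    _ ≤ ‖v‖ * ‖Matrix.toEuclideanCLM (𝕜 := ℝ) M v‖ := h3
    _ ≤ ‖v‖ * (opN M * ‖v‖) := by
        apply mul_le_mul_of_nonneg_left h4 hvn
    _ = opN M * (u ⬝ᵥ u) := by rw [← h2, h5]; ring

lemma aux_smul_posdef {D : Matrix n n ℝ} (hD : D.PosDef) {c : ℝ} (hc : 0 < c) :
    (c • D).PosDef := by
  rw [Matrix.posDef_iff_dotProduct_mulVec]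
  constructor
  · show (c • D)ᴴ = c • D
    rw [Matrix.conjTranspose_smul, hD.isHermitian.eq]
    simp
  · intro x hx
    have := hD.dotProduct_mulVec_pos hx
    simp only [Matrix.smul_mulVec, dotProduct_smul, smul_eq_mul] at *
    simpa using mul_pos hc (by simpa using this)

end Aux

/-- the additive proxy sandwich:
`Δ_add/(1+ρ) ≤ Δ ≤ Δ_add/(1-ρ)` and `|Δ - Δ_add| ≤ ρ/(1-ρ) Δ_add`. -/
theorem additive_proxy_sandwich
    {n L : Type*} [Fintype n] [DecidableEq n] [DecidableEq L]
    (blk : n → L) (HSS D E M : Matrix n n ℝ)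
    (hHSS : HSS.PosDef) (hD : D.PosDef)
    (hDdef : ∀ i j, D i j = if blk i = blk j then HSS i j else 0)
    (hE : E = HSS - D)
    (hM : M = (CFC.sqrt D)⁻¹ * E * (CFC.sqrt D)⁻¹)
    (ρ : ℝ) (hρ : ρ = opN M) (hρ1 : ρ < 1)
    (g : n → ℝ) (Δ Δadd : ℝ)
    (hΔ : Δ = (1/2) * (g ⬝ᵥ (HSS⁻¹ *ᵥ g)))
    (hΔadd : Δadd = (1/2) * (g ⬝ᵥ (D⁻¹ *ᵥ g))) :
    (1 / (1 + ρ)) * Δadd ≤ Δ ∧ Δ ≤ (1 / (1 - ρ)) * Δadd ∧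
    |Δ - Δadd| ≤ (ρ / (1 - ρ)) * Δadd := by
  have hρ0 : 0 ≤ ρ := hρ ▸ norm_nonneg _
  have h1m : (0 : ℝ) < 1 - ρ := by linarith
  have h1p : (0 : ℝ) < 1 + ρ := by linarith
  set S := CFC.sqrt D with hS
  have hSS : S * S = D := CFC.sqrt_mul_sqrt_self D hD.posSemidef.nonneg
  have hSt : Sᵀ = S := by
    have h := (CFC.sqrt_nonneg D).posSemidef.isHermitian
    rwa [Matrix.IsHermitian, Matrix.conjTranspose_eq_transpose_of_trivial] at h
  have hdetD : D.det ≠ 0 := hD.det_pos.ne'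
  have hdetS : S.det ≠ 0 := by
    intro h
    apply hdetD
    rw [← hSS, Matrix.det_mul, h, mul_zero]
  have hSinv : S⁻¹ * S = 1 := Matrix.nonsing_inv_mul S (isUnit_iff_ne_zero.mpr hdetS)
  have hSinv' : S * S⁻¹ = 1 := Matrix.mul_nonsing_inv S (isUnit_iff_ne_zero.mpr hdetS)
  have hESMS : S * M * S = E := by
    rw [hM]
    calc S * (S⁻¹ * E * S⁻¹) * S = (S * S⁻¹) * E * (S⁻¹ * S) := by
          noncomm_ring
      _ = E := by rw [hSinv, hSinv', Matrix.one_mul, Matrix.mul_one]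
  -- quadratic form bound for E
  have hEbound : ∀ x : n → ℝ, |x ⬝ᵥ E *ᵥ x| ≤ ρ * (x ⬝ᵥ D *ᵥ x) := by
    intro x
    have hmv : E *ᵥ x = S *ᵥ (M *ᵥ (S *ᵥ x)) := by
      rw [← hESMS, ← Matrix.mulVec_mulVec, ← Matrix.mulVec_mulVec]
    have hswap : x ⬝ᵥ S *ᵥ (M *ᵥ (S *ᵥ x)) = (S *ᵥ x) ⬝ᵥ M *ᵥ (S *ᵥ x) := by
      rw [aux_sym_swap hSt, dotProduct_comm]
    have hDx : (S *ᵥ x) ⬝ᵥ (S *ᵥ x) = x ⬝ᵥ D *ᵥ x := by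
      rw [← hSS, ← Matrix.mulVec_mulVec]
      rw [aux_sym_swap hSt x (S *ᵥ x), dotProduct_comm]
    have := aux_opN_quad M (S *ᵥ x)
    rw [hmv, hswap, ← hρ] at *
    rw [hDx] at this
    exact this
  -- quadratic sandwich for HSS
  have hub : ∀ x : n → ℝ, x ⬝ᵥ HSS *ᵥ x ≤ x ⬝ᵥ ((1 + ρ) • D) *ᵥ x := by
    intro x
    have hEq : x ⬝ᵥ HSS *ᵥ x = x ⬝ᵥ D *ᵥ x + x ⬝ᵥ E *ᵥ x := by
      rw [hE]
      simp [Matrix.sub_mulVec, dotProduct_sub]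
    have h := (abs_le.mp (hEbound x)).2
    rw [hEq]
    simp only [Matrix.smul_mulVec, dotProduct_smul, smul_eq_mul]
    linarith
  have hlb : ∀ x : n → ℝ, x ⬝ᵥ ((1 - ρ) • D) *ᵥ x ≤ x ⬝ᵥ HSS *ᵥ x := by
    intro x
    have hEq : x ⬝ᵥ HSS *ᵥ x = x ⬝ᵥ D *ᵥ x + x ⬝ᵥ E *ᵥ x := by
      rw [hE]
      simp [Matrix.sub_mulVec, dotProduct_sub]
    have h := (abs_le.mp (hEbound x)).1
    rw [hEq]
    simp only [Matrix.smul_mulVec, dotProduct_smul, smul_eq_mul]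
    linarith
  -- inverses of scaled matrices
  have hinv : ∀ c : ℝ, c ≠ 0 → (c • D)⁻¹ = c⁻¹ • D⁻¹ := by
    intro c hc
    apply Matrix.inv_eq_right_inv
    rw [Matrix.smul_mul, Matrix.mul_smul, smul_smul, Matrix.mul_nonsing_inv D (isUnit_iff_ne_zero.mpr hdetD),
      mul_inv_cancel₀ hc, one_smul]
  have hq0 : 0 ≤ g ⬝ᵥ D⁻¹ *ᵥ g := aux_dot_nonneg hD.inv.posSemidef g
  -- apply inversion antitonicity
  have hupper : g ⬝ᵥ HSS⁻¹ *ᵥ g ≤ (1 - ρ)⁻¹ * (g ⬝ᵥ D⁻¹ *ᵥ g) := by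
    have := aux_inv_antitone (aux_smul_posdef hD h1m) hHSS hlb g
    rwa [hinv _ h1m.ne', Matrix.smul_mulVec, dotProduct_smul,
      smul_eq_mul] at this
  have hlower : (1 + ρ)⁻¹ * (g ⬝ᵥ D⁻¹ *ᵥ g) ≤ g ⬝ᵥ HSS⁻¹ *ᵥ g := by
    have := aux_inv_antitone hHSS (aux_smul_posdef hD h1p) hub g
    rwa [hinv _ h1p.ne', Matrix.smul_mulVec, dotProduct_smul,
      smul_eq_mul] at this
  set q := g ⬝ᵥ D⁻¹ *ᵥ g
  set h := g ⬝ᵥ HSS⁻¹ *ᵥ g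
  have e1 : Δ = h / 2 := by rw [hΔ]; ring
  have e2 : Δadd = q / 2 := by rw [hΔadd]; ring
  have hA : (1 / (1 + ρ)) * Δadd ≤ Δ := by
    rw [e1, e2, one_div]
    nlinarith [hlower]
  have hB : Δ ≤ (1 / (1 - ρ)) * Δadd := by
    rw [e1, e2, one_div]
    nlinarith [hupper]
  refine ⟨hA, hB, ?_⟩
  rw [abs_le]
  constructor
  · -- Δadd - Δ ≤ ρ/(1-ρ) * Δadd
    have key : Δadd - Δ ≤ (ρ / (1 + ρ)) * Δadd := by
      have : (1 - 1 / (1 + ρ)) * Δadd = (ρ / (1 + ρ)) * Δadd := by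
        field_simp
        ring
      nlinarith [hA]
    have hmono : (ρ / (1 + ρ)) * Δadd ≤ (ρ / (1 - ρ)) * Δadd := by
      have hΔadd0 : 0 ≤ Δadd := by rw [e2]; linarith
      have hdiv : ρ / (1 + ρ) ≤ ρ / (1 - ρ) :=
        div_le_div_of_nonneg_left hρ0 h1m (by linarith)
      exact mul_le_mul_of_nonneg_right hdiv hΔadd0
    linarith
  · have : (1 / (1 - ρ) - 1) * Δadd = (ρ / (1 - ρ)) * Δadd := by
      field_simp
      ring
    nlinarith [hB]
end
end
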